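/- arXiv:2208.04065 — 6 statements merged into one kernel-verified Lean document; each statement's English description precedes it below -/
import Mathlib

section
/- The convex conjugate of φ(x) = α(|x|+β)ln(|x|/β + 1) − α|x| is φ*(θ) = αβ·exp(|θ|/α) − β|θ| − αβ, i.e., for every θ ∈ ℝ, sup_{x ∈ ℝ} (θx − φ(x)) = αβ·exp(|θ|/α) − β|θ| − αβ. -/
/-- The convex conjugate of φ(x) = α(|x|+β)ln(|x|/β + 1) − α|x| is
φ*(θ) = αβ·exp(|θ|/α) − β|θ| − αβ. -/
theorem stmt_2 (α β : ℝ) (hα : 0 < α) (hβ : 0 < β) (θ : ℝ) :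
    (⨆ x : ℝ, (θ * x - (α * (|x| + β) * Real.log (|x| / β + 1) - α * |x|)))
      = α * β * Real.exp (|θ| / α) - β * |θ| - α * β := by
  have key : ∀ x : ℝ, θ * x - (α * (|x| + β) * Real.log (|x| / β + 1) - α * |x|)
      ≤ α * β * Real.exp (|θ| / α) - β * |θ| - α * β := by
    intro x
    have habs : (0:ℝ) ≤ |x| := abs_nonneg x
    set T : ℝ := |x| + β with hT
    have hT0 : 0 < T := by positivity
    have hlog : Real.log (|x| / β + 1) = Real.log (T / β) := by
      congr 1
      field_simp [hT]
      exact hT.symm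
    have hθx : θ * x ≤ |θ| * |x| := by
      calc θ * x ≤ |θ * x| := le_abs_self _
        _ = |θ| * |x| := abs_mul _ _
    have base : 1 + (|θ| / α - Real.log (T / β)) ≤ Real.exp (|θ| / α - Real.log (T / β)) := by
      linarith [Real.add_one_le_exp (|θ| / α - Real.log (T / β))]
    have hexp : Real.exp (|θ| / α - Real.log (T / β)) = Real.exp (|θ| / α) * β / T := by
      rw [Real.exp_sub, Real.exp_log (by positivity)]
      field_simp
    rw [hexp] at base
    have main : α * T + |θ| * T - α * T * Real.log (T / β) ≤ α * β * Real.exp (|θ| / α) := by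
      have h1 := mul_le_mul_of_nonneg_left base (le_of_lt (mul_pos hα hT0))
      have h2 : α * T * (Real.exp (|θ| / α) * β / T) = α * β * Real.exp (|θ| / α) := by
        field_simp
      rw [h2] at h1
      have hα' : α ≠ 0 := ne_of_gt hα
      calc α * T + |θ| * T - α * T * Real.log (T / β)
          = α * T * (1 + (|θ| / α - Real.log (T / β))) := by field_simp; ring
        _ ≤ α * β * Real.exp (|θ| / α) := h1
    have hx : |x| = T - β := by rw [hT]; ring
    rw [hlog, hx]
    rw [hx] at hθx
    have e1 : |θ| * (T - β) = |θ| * T - |θ| * β := by ring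
    rw [e1] at hθx
    have e2 : α * (T - β) = α * T - α * β := by ring
    rw [e2]
    clear_value T
    linarith [main, hθx]
  set M : ℝ := α * β * Real.exp (|θ| / α) - β * |θ| - α * β with hM
  have hbdd : BddAbove (Set.range fun x : ℝ =>
      θ * x - (α * (|x| + β) * Real.log (|x| / β + 1) - α * |x|)) := by
    refine ⟨M, ?_⟩
    rintro y ⟨x, rfl⟩
    exact key x
  have hexp1 : (1:ℝ) ≤ Real.exp (|θ| / α) := by
    rw [Real.one_le_exp_iff]
    positivity
  set m : ℝ := β * (Real.exp (|θ| / α) - 1) with hm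
  have hm0 : 0 ≤ m := by
    have : 0 ≤ Real.exp (|θ| / α) - 1 := by linarith
    positivity
  set x₀ : ℝ := if θ < 0 then -m else m with hx₀def
  have habs₀ : |x₀| = m := by
    rw [hx₀def]
    split_ifs
    · rw [abs_neg, abs_of_nonneg hm0]
    · rw [abs_of_nonneg hm0]
  have hθx₀ : θ * x₀ = |θ| * m := by
    rw [hx₀def]
    split_ifs with h
    · rw [abs_of_neg h]; ring
    · rw [abs_of_nonneg (not_lt.mp h)]
  have hlog₀ : Real.log (m / β + 1) = |θ| / α := by
    rw [hm]
    have : β * (Real.exp (|θ| / α) - 1) / β + 1 = Real.exp (|θ| / α) := by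
      field_simp
      ring
    rw [this, Real.log_exp]
  have hval : θ * x₀ - (α * (|x₀| + β) * Real.log (|x₀| / β + 1) - α * |x₀|) = M := by
    rw [hθx₀, habs₀, hlog₀, hM, hm]
    have hα' : α ≠ 0 := ne_of_gt hα
    field_simp
    ring
  apply le_antisymm
  · exact ciSup_le key
  · calc M = _ := hval.symm
      _ ≤ _ := le_ciSup hbdd x₀
end

section
/- For every x ∈ ℝ^d with ‖x‖₁ ≤ D and every v ∈ ℝ^d, the quadratic form of the Hessian of ψ(x) = α·Σᵢ[(|xᵢ|+β)ln(|xᵢ|/β+1) − |xᵢ|] satisfies v^T ∇²ψ(x) v = α·Σᵢ vᵢ²/(|xᵢ|+β) ≥ (α/(D + dβ))·‖v‖₁². -/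
/-- Hessian quadratic-form lower bound: for ‖x‖₁ ≤ D,
α·Σᵢ vᵢ²/(|xᵢ|+β) ≥ (α/(D + dβ))·‖v‖₁². -/
theorem stmt_5 (d : ℕ) (hd : 1 ≤ d) (α β D : ℝ) (hα : 0 < α) (hβ : 0 < β) (hD : 0 < D)
    (x v : Fin d → ℝ) (hx : ∑ i, |x i| ≤ D) :
    α * ∑ i, (v i) ^ 2 / (|x i| + β) ≥ α / (D + d * β) * (∑ i, |v i|) ^ 2 := by
  have hpos : (0:ℝ) < D + d * β := by positivity
  have hsum : ∑ i, (|x i| + β) ≤ D + d * β := by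
    rw [Finset.sum_add_distrib, Finset.sum_const, Finset.card_univ, Fintype.card_fin,
      nsmul_eq_mul]
    linarith
  have hCS := Finset.sq_sum_div_le_sum_sq_div Finset.univ (fun i => |v i|)
    (g := fun i => |x i| + β) (fun i _ => by positivity)
  simp only [sq_abs] at hCS
  have h1 : (∑ i, |v i|) ^ 2 / (D + d * β) ≤ ∑ i, (v i) ^ 2 / (|x i| + β) := by
    refine le_trans ?_ hCS
    have hspos : (0:ℝ) < ∑ i : Fin d, (|x i| + β) := by
      calc (0:ℝ) < (d:ℝ) * β := by
            have : (0:ℝ) < (d:ℝ) := by exact_mod_cast hd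
            positivity
        _ ≤ ∑ i : Fin d, (|x i| + β) := by
            rw [Finset.sum_add_distrib, Finset.sum_const, Finset.card_univ, Fintype.card_fin,
              nsmul_eq_mul]
            have : (0:ℝ) ≤ ∑ i, |x i| := Finset.sum_nonneg fun i _ => abs_nonneg _
            linarith
    exact div_le_div_of_nonneg_left (sq_nonneg _) hspos hsum
  calc α / (D + d * β) * (∑ i, |v i|) ^ 2 = α * ((∑ i, |v i|) ^ 2 / (D + d * β)) := by ring
    _ ≤ α * ∑ i, (v i) ^ 2 / (|x i| + β) := by
        exact mul_le_mul_of_nonneg_left h1 hα.le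
end

section
/- For positive reals a₁, …, aₙ, the inequalities √(Σ_{i=1}^n aᵢ) ≤ Σ_{i=1}^n aᵢ/√(Σ_{j=1}^i aⱼ) ≤ 2√(Σ_{i=1}^n aᵢ) hold. -/
/-- For positive reals a₁, …, aₙ:
√(Σ aᵢ) ≤ Σᵢ aᵢ/√(Σ_{j≤i} aⱼ) ≤ 2√(Σ aᵢ). -/
theorem stmt_8 (n : ℕ) (a : ℕ → ℝ) (ha : ∀ i < n, 0 < a i) :
    Real.sqrt (∑ i ∈ Finset.range n, a i)
        ≤ ∑ i ∈ Finset.range n, a i / Real.sqrt (∑ j ∈ Finset.range (i + 1), a j) ∧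
    ∑ i ∈ Finset.range n, a i / Real.sqrt (∑ j ∈ Finset.range (i + 1), a j)
        ≤ 2 * Real.sqrt (∑ i ∈ Finset.range n, a i) := by
  induction n with
  | zero => simp
  | succ n ih =>
    obtain ⟨ih1, ih2⟩ := ih (fun i hi => ha i (Nat.lt_succ_of_lt hi))
    set S := ∑ i ∈ Finset.range n, a i with hS
    have hSnn : 0 ≤ S := Finset.sum_nonneg fun i hi =>
      (ha i (Nat.lt_succ_of_lt (Finset.mem_range.mp hi))).le
    have han : 0 < a n := ha n (Nat.lt_succ_self n)
    have hT : ∑ i ∈ Finset.range (n + 1), a i = S + a n := by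
      rw [Finset.sum_range_succ]
    have hTpos : 0 < S + a n := by linarith
    have hsT : 0 < Real.sqrt (S + a n) := Real.sqrt_pos.mpr hTpos
    have hsle : Real.sqrt S ≤ Real.sqrt (S + a n) :=
      Real.sqrt_le_sqrt (by linarith)
    have hsq : Real.sqrt (S + a n) * Real.sqrt (S + a n) = S + a n :=
      Real.mul_self_sqrt hTpos.le
    have hsqS : Real.sqrt S * Real.sqrt S = S := Real.mul_self_sqrt hSnn
    rw [Finset.sum_range_succ (f := fun i => a i / Real.sqrt (∑ j ∈ Finset.range (i + 1), a j)),
      hT]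
    constructor
    · -- √(S+a) ≤ (sum over range n) + a n / √(S+a)
      have key : Real.sqrt (S + a n) - Real.sqrt S ≤ a n / Real.sqrt (S + a n) := by
        rw [le_div_iff₀ hsT]
        nlinarith [Real.sqrt_nonneg S]
      linarith
    · have key : a n / Real.sqrt (S + a n) ≤
          2 * Real.sqrt (S + a n) - 2 * Real.sqrt S := by
        rw [div_le_iff₀ hsT]
        nlinarith [Real.sqrt_nonneg S]
      linarith
end

section
/- Let ψ(x) = Σᵢ φ(xᵢ) with φ(x) = (|x|+β)ln(|x|/β+1) − |x| and β = 1/d. For any x, y in a convex set K ⊆ ℝ^d with ℓ₁-norm bounded by D, the Bregman divergence satisfies B_ψ(x, y) ≤ 4D(ln(D+1) + ln d). -/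
/-- With β = 1/d, the Bregman divergence of ψ(x) = Σᵢ[(|xᵢ|+β)ln(|xᵢ|/β+1) − |xᵢ|]
on an ℓ₁ ball of radius D is bounded by 4D(ln(D+1) + ln d). -/
theorem stmt_10 (d : ℕ) (hd : 1 ≤ d) (D : ℝ) (hD : 0 < D)
    (K : Set (Fin d → ℝ)) (hK : Convex ℝ K) (hbound : ∀ z ∈ K, ∑ i, |z i| ≤ D)
    (x y : Fin d → ℝ) (hx : x ∈ K) (hy : y ∈ K) :
    (∑ i, ((|x i| + 1 / (d : ℝ)) * Real.log (|x i| / (1 / (d : ℝ)) + 1) - |x i|))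
      - (∑ i, ((|y i| + 1 / (d : ℝ)) * Real.log (|y i| / (1 / (d : ℝ)) + 1) - |y i|))
      - ∑ i, Real.log (|y i| / (1 / (d : ℝ)) + 1) * Real.sign (y i) * (x i - y i)
    ≤ 4 * D * (Real.log (D + 1) + Real.log d) := by
  have hd0 : (0:ℝ) < d := by exact_mod_cast hd
  set L := Real.log (D + 1) + Real.log d with hLdef
  have hL : 0 ≤ L := by
    have h1 : 0 ≤ Real.log (D + 1) := Real.log_nonneg (by linarith)
    have h2 : 0 ≤ Real.log d := Real.log_nonneg (by exact_mod_cast hd)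
    linarith
  have hxD : ∀ i, |x i| ≤ D := fun i =>
    le_trans (Finset.single_le_sum (fun j _ => abs_nonneg (x j)) (Finset.mem_univ i))
      (hbound x hx)
  have hyD : ∀ i, |y i| ≤ D := fun i =>
    le_trans (Finset.single_le_sum (fun j _ => abs_nonneg (y j)) (Finset.mem_univ i))
      (hbound y hy)
  have hdivmul : ∀ t : ℝ, |t| / (1 / (d:ℝ)) + 1 = |t| * d + 1 := by
    intro t; rw [div_div_eq_mul_div, div_one]
  have hlognn : ∀ t : ℝ, 0 ≤ Real.log (|t| / (1 / (d:ℝ)) + 1) := by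
    intro t
    apply Real.log_nonneg
    rw [hdivmul]
    nlinarith [abs_nonneg t]
  have hlogle : ∀ t : ℝ, |t| ≤ D → Real.log (|t| / (1 / (d:ℝ)) + 1) ≤ L := by
    intro t ht
    rw [hdivmul]
    have h1 : |t| * d + 1 ≤ (D + 1) * d := by
      have h1d : (1:ℝ) ≤ d := by exact_mod_cast hd
      nlinarith [mul_le_mul_of_nonneg_right ht (le_of_lt hd0)]
    have h2 : (0:ℝ) < |t| * d + 1 := by nlinarith [abs_nonneg t]
    calc Real.log (|t| * d + 1) ≤ Real.log ((D + 1) * d) := Real.log_le_log h2 h1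
      _ = L := by rw [Real.log_mul (by linarith) (ne_of_gt hd0)]
  -- φ is nonnegative
  have hphi_nn : ∀ t : ℝ,
      0 ≤ (|t| + 1 / (d:ℝ)) * Real.log (|t| / (1 / (d:ℝ)) + 1) - |t| := by
    intro t
    rw [hdivmul]
    have ha : (0:ℝ) < |t| * d + 1 := by nlinarith [abs_nonneg t]
    have h1 : Real.log (1 / (|t| * d + 1)) ≤ 1 / (|t| * d + 1) - 1 :=
      Real.log_le_sub_one_of_pos (by positivity)
    rw [Real.log_div one_ne_zero (ne_of_gt ha), Real.log_one] at h1
    -- h1 : -log(|t|*d+1) ≤ 1/(|t|*d+1) - 1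
    have h2 : (|t| * d) / (|t| * d + 1) ≤ Real.log (|t| * d + 1) := by
      have : 1 / (|t| * d + 1) - 1 = -((|t| * d) / (|t| * d + 1)) := by
        field_simp
        ring
      linarith [h1.trans_eq this]
    have h3 : (|t| + 1 / (d:ℝ)) = (1 / (d:ℝ)) * (|t| * d + 1) := by
      field_simp
    rw [h3]
    have h4 : (|t| * d + 1) * ((|t| * d) / (|t| * d + 1)) = |t| * d := by
      field_simp
    have h5 : |t| * d ≤ (|t| * d + 1) * Real.log (|t| * d + 1) := by
      nlinarith [mul_le_mul_of_nonneg_left h2 (le_of_lt ha)]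
    have h6 : (1/(d:ℝ)) * (|t| * d) = |t| := by field_simp
    nlinarith [mul_le_mul_of_nonneg_left h5 (by positivity : (0:ℝ) ≤ 1/(d:ℝ))]
  -- φ upper bound
  have hphi_ub : ∀ t : ℝ, |t| ≤ D →
      (|t| + 1 / (d:ℝ)) * Real.log (|t| / (1 / (d:ℝ)) + 1) - |t| ≤ |t| * L := by
    intro t ht
    have hle := hlogle t ht
    have hnn := hlognn t
    rw [hdivmul] at hle hnn ⊢
    have ha : (0:ℝ) < |t| * d + 1 := by nlinarith [abs_nonneg t]
    have h1 : Real.log (|t| * d + 1) ≤ |t| * d := by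
      have := Real.log_le_sub_one_of_pos ha
      linarith
    have h2 : (1 / (d:ℝ)) * Real.log (|t| * d + 1) ≤ |t| := by
      rw [div_mul_eq_mul_div, one_mul, div_le_iff₀ hd0]
      nlinarith
    nlinarith [abs_nonneg t, mul_le_mul_of_nonneg_left hle (abs_nonneg t)]
  have hsign : ∀ t : ℝ, |Real.sign t| ≤ 1 := by
    intro t
    rcases lt_trichotomy t 0 with h | h | h
    · simp [Real.sign_of_neg h]
    · simp [h]
    · simp [Real.sign_of_pos h]
  -- bound the three pieces
  have hsum1 : (∑ i, ((|x i| + 1 / (d:ℝ)) * Real.log (|x i| / (1 / (d:ℝ)) + 1) - |x i|))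
      ≤ D * L := by
    calc (∑ i, ((|x i| + 1 / (d:ℝ)) * Real.log (|x i| / (1 / (d:ℝ)) + 1) - |x i|))
        ≤ ∑ i, |x i| * L :=
          Finset.sum_le_sum (fun i _ => hphi_ub (x i) (hxD i))
      _ = (∑ i, |x i|) * L := by rw [Finset.sum_mul]
      _ ≤ D * L := mul_le_mul_of_nonneg_right (hbound x hx) hL
  have hsum2 : 0 ≤ (∑ i, ((|y i| + 1 / (d:ℝ)) * Real.log (|y i| / (1 / (d:ℝ)) + 1) - |y i|)) :=
    Finset.sum_nonneg (fun i _ => hphi_nn (y i))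
  have hsum3 : -(∑ i, Real.log (|y i| / (1 / (d:ℝ)) + 1) * Real.sign (y i) * (x i - y i))
      ≤ 2 * D * L := by
    have hterm : ∀ i, -(Real.log (|y i| / (1 / (d:ℝ)) + 1) * Real.sign (y i) * (x i - y i))
        ≤ L * (|x i| + |y i|) := by
      intro i
      have h1 : |Real.log (|y i| / (1 / (d:ℝ)) + 1) * Real.sign (y i) * (x i - y i)|
          ≤ L * (|x i| + |y i|) := by
        rw [abs_mul, abs_mul]
        have habs : |x i - y i| ≤ |x i| + |y i| := abs_sub _ _
        have hlogabs : |Real.log (|y i| / (1 / (d:ℝ)) + 1)| ≤ L := by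
          rw [abs_of_nonneg (hlognn (y i))]; exact hlogle (y i) (hyD i)
        calc |Real.log (|y i| / (1 / (d:ℝ)) + 1)| * |Real.sign (y i)| * |x i - y i|
            ≤ L * 1 * (|x i| + |y i|) := by
              apply mul_le_mul
              · exact mul_le_mul hlogabs (hsign (y i)) (abs_nonneg _) hL
              · exact habs
              · exact abs_nonneg _
              · positivity
          _ = L * (|x i| + |y i|) := by ring
      linarith [neg_abs_le (Real.log (|y i| / (1 / (d:ℝ)) + 1) * Real.sign (y i) * (x i - y i))]
    calc -(∑ i, Real.log (|y i| / (1 / (d:ℝ)) + 1) * Real.sign (y i) * (x i - y i))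
        = ∑ i, -(Real.log (|y i| / (1 / (d:ℝ)) + 1) * Real.sign (y i) * (x i - y i)) := by
          rw [Finset.sum_neg_distrib]
      _ ≤ ∑ i, L * (|x i| + |y i|) := Finset.sum_le_sum (fun i _ => hterm i)
      _ = L * ((∑ i, |x i|) + (∑ i, |y i|)) := by
          rw [← Finset.mul_sum, Finset.sum_add_distrib]
      _ ≤ L * (D + D) := by
          apply mul_le_mul_of_nonneg_left _ hL
          linarith [hbound x hx, hbound y hy]
      _ = 2 * D * L := by ring
  have h34 : 3 * (D * L) ≤ 4 * D * L := by nlinarith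
  have hsum1' := hsum1
  nlinarith [hsum1, hsum2, hsum3, h34]
end

section
/- Let a, b > 0 and c ∈ ℝ. The unique nonnegative solution x of the equation ln(x/a + 1) + b·x + c = 0, when c < 0, is x = (1/b)·W₀(ab·exp(ab − c)) − a, where W₀ is the principal branch of the Lambert W function. -/
lemma lam_mono : ∀ s t : ℝ, 0 ≤ s → s < t → s * Real.exp s < t * Real.exp t := by
  intro s t hs hst
  calc s * Real.exp s ≤ s * Real.exp t := by
        exact mul_le_mul_of_nonneg_left (Real.exp_le_exp.mpr hst.le) hs
    _ < t * Real.exp t := by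
        exact mul_lt_mul_of_pos_right hst (Real.exp_pos t)

lemma lam_inj : ∀ s t : ℝ, 0 ≤ s → 0 ≤ t → s * Real.exp s = t * Real.exp t → s = t := by
  intro s t hs ht h
  rcases lt_trichotomy s t with h1 | h1 | h1
  · exact absurd h (ne_of_lt (lam_mono s t hs h1))
  · exact h1
  · exact absurd h.symm (ne_of_lt (lam_mono t s ht h1))

/-- For a, b > 0 and c < 0, the unique nonnegative solution of
ln(x/a + 1) + bx + c = 0 is x = (1/b)·W₀(ab·exp(ab − c)) − a, where W₀ is the
principal branch of the Lambert W function (here given axiomatically on [0,∞)). -/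
theorem stmt_12 (a b c : ℝ) (ha : 0 < a) (hb : 0 < b) (hc : c < 0)
    (W : ℝ → ℝ) (hW : ∀ y ≥ (0 : ℝ), 0 ≤ W y ∧ W y * Real.exp (W y) = y) :
    0 ≤ 1 / b * W (a * b * Real.exp (a * b - c)) - a ∧
    Real.log ((1 / b * W (a * b * Real.exp (a * b - c)) - a) / a + 1)
        + b * (1 / b * W (a * b * Real.exp (a * b - c)) - a) + c = 0 ∧
    ∀ x' ≥ (0 : ℝ), Real.log (x' / a + 1) + b * x' + c = 0 →
        x' = 1 / b * W (a * b * Real.exp (a * b - c)) - a := by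
  set y := a * b * Real.exp (a * b - c) with hy_def
  have hy : (0:ℝ) ≤ y := by positivity
  obtain ⟨hW0, hWe⟩ := hW y hy
  set w := W y with hw_def
  have hab : 0 < a * b := by positivity
  -- w > a*b
  have hwgt : a * b < w := by
    by_contra h
    push_neg at h
    have h1 : a * b * Real.exp (a * b) < w * Real.exp w := by
      rw [hWe, hy_def]
      have : Real.exp (a * b) < Real.exp (a * b - c) := by
        apply Real.exp_lt_exp.mpr; linarith
      exact mul_lt_mul_of_pos_left this hab
    rcases eq_or_lt_of_le h with h2 | h2
    · rw [h2] at h1; exact lt_irrefl _ h1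
    · exact absurd h1 (not_lt.mpr (lam_mono w (a*b) hW0 h2).le)
  have hwpos : 0 < w := lt_trans hab hwgt
  -- log identity
  have hlog : Real.log w + w = Real.log (a * b) + (a * b - c) := by
    have := congrArg Real.log hWe
    rwa [Real.log_mul (ne_of_gt hwpos) (Real.exp_ne_zero _), Real.log_exp,
      Real.log_mul (ne_of_gt hab) (Real.exp_ne_zero _), Real.log_exp] at this
  have hx0 : 0 ≤ 1 / b * w - a := by
    have h : 1 / b * w - a = (w - a * b) / b := by field_simp
    rw [h]
    exact div_nonneg (by linarith) hb.le
  refine ⟨hx0, ?_, ?_⟩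
  · have harg : (1 / b * w - a) / a + 1 = w / (a * b) := by
      field_simp; ring_nf
    rw [harg, Real.log_div (ne_of_gt hwpos) (ne_of_gt hab)]
    have : b * (1 / b * w - a) = w - a * b := by field_simp
    rw [this]
    linarith
  · intro x' hx' heq
    have htpos : 0 < b * x' + a * b := by positivity
    have harg : x' / a + 1 = (b * x' + a * b) / (a * b) := by field_simp
    rw [harg, Real.log_div (ne_of_gt htpos) (ne_of_gt hab)] at heq
    have hlt : Real.log (b * x' + a * b) + (b * x' + a * b) = Real.log w + w := by
      rw [hlog]; linarith
    have hexp : (b * x' + a * b) * Real.exp (b * x' + a * b) = w * Real.exp w := by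
      have h1 : Real.exp (Real.log (b * x' + a * b)) * Real.exp (b * x' + a * b)
          = Real.exp (Real.log w) * Real.exp w := by
        rw [← Real.exp_add, ← Real.exp_add, hlt]
      rwa [Real.exp_log htpos, Real.exp_log hwpos] at h1
    have := lam_inj _ w htpos.le hW0 hexp
    field_simp
    linarith
end

section
/- Let y ∈ ℝ^d with all yᵢ ≥ 0 and Σᵢ yᵢ > D > 0, and β > 0. The minimizer x* of Σᵢ[(xᵢ+β)ln((xᵢ+β)/(yᵢ+β)) − xᵢ] over the set {x ∈ ℝ^d : Σᵢ xᵢ = D, xᵢ ≥ 0} restricted to its support satisfies xᵢ* + β = (yᵢ + β)/z for a common constant z > 0 whenever xᵢ* > 0, and xᵢ* = max{(yᵢ+β)/z − β, 0}. -/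
/-- Gradient inequality for the convex function t ↦ (t+β) log((t+β)/c) - t. -/
lemma stmt13_grad_ineq (β c s t : ℝ) (hβ : 0 < β) (hc : 0 < c) (_hs : 0 ≤ s) (_ht : 0 ≤ t) :
    (s + β) * Real.log ((s + β) / c) - s + Real.log ((s + β) / c) * (t - s)
      ≤ (t + β) * Real.log ((t + β) / c) - t := by
  have hv : 0 < s + β := by linarith
  have hu : 0 < t + β := by linarith
  have h1 : Real.log ((s + β) / (t + β)) ≤ (s + β) / (t + β) - 1 :=
    Real.log_le_sub_one_of_pos (by positivity)
  have h2 : Real.log ((t + β) / c) = Real.log ((s + β) / c) - Real.log ((s + β) / (t + β)) := by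
    rw [Real.log_div hv.ne' hc.ne', Real.log_div hu.ne' hc.ne', Real.log_div hv.ne' hu.ne']
    ring
  rw [h2]
  have h3 : (t + β) * Real.log ((s + β) / (t + β)) ≤ (s + β) - (t + β) := by
    calc (t + β) * Real.log ((s + β) / (t + β))
        ≤ (t + β) * ((s + β) / (t + β) - 1) := mul_le_mul_of_nonneg_left h1 hu.le
      _ = (s + β) - (t + β) := by field_simp
  nlinarith [h3]

/-- KKT characterization of the minimizer of the Bregman projection onto the simplex:
there is z > 0 with x*ᵢ = max{(yᵢ+β)/z − β, 0} feasible and minimizing. -/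
theorem stmt_13 (d : ℕ) (D β : ℝ) (hD : 0 < D) (hβ : 0 < β)
    (y : Fin d → ℝ) (hy : ∀ i, 0 ≤ y i) (hsum : D < ∑ i, y i) :
    ∃ z > (0 : ℝ),
      (∑ i, max ((y i + β) / z - β) 0 = D) ∧
      ∀ x : Fin d → ℝ, (∀ i, 0 ≤ x i) → (∑ i, x i = D) →
        ∑ i, ((max ((y i + β) / z - β) 0 + β)
              * Real.log ((max ((y i + β) / z - β) 0 + β) / (y i + β))
              - max ((y i + β) / z - β) 0)
          ≤ ∑ i, ((x i + β) * Real.log ((x i + β) / (y i + β)) - x i) := by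
  set S : ℝ := ∑ i, (y i + β) with hS_def
  have hSy : ∑ i, y i ≤ S := Finset.sum_le_sum (fun i _ => by linarith)
  have hS : 0 < S := lt_of_lt_of_le (lt_trans hD hsum) hSy
  set Z : ℝ := S / D + 1 with hZ_def
  have hZpos : 0 < Z := by positivity
  have hZ1 : (1:ℝ) ≤ Z := by
    have h' : 0 < S / D := by positivity
    rw [hZ_def]; linarith
  set g : ℝ → ℝ := fun z => ∑ i, max ((y i + β) / z - β) 0 with hg_def
  have hg1 : g 1 = ∑ i, y i := by
    simp only [hg_def]
    refine Finset.sum_congr rfl (fun i _ => ?_)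
    have h : (y i + β) / 1 - β = y i := by ring
    rw [h]
    exact max_eq_left (hy i)
  have hgZ : g Z < D := by
    have h1 : g Z ≤ S / Z := by
      simp only [hg_def]
      rw [hS_def, Finset.sum_div]
      refine Finset.sum_le_sum (fun i _ => ?_)
      refine max_le ?_ (div_nonneg (by linarith [hy i]) hZpos.le)
      have : 0 < (y i + β) := by linarith [hy i]
      nlinarith [div_nonneg this.le hZpos.le]
    have h2 : S / Z < D := by
      rw [div_lt_iff₀ hZpos]
      have hDZ : D * Z = S + D := by
        rw [hZ_def]
        field_simp
      rw [hDZ]; linarith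
    linarith
  have hcont : ContinuousOn g (Set.Icc 1 Z) := by
    apply continuousOn_finset_sum
    intro i _
    have hne : ∀ w ∈ Set.Icc (1:ℝ) Z, w ≠ 0 := fun w hw =>
      (lt_of_lt_of_le one_pos hw.1).ne'
    exact ((continuousOn_const.div (continuous_id.continuousOn) hne).sub
      continuousOn_const).sup continuousOn_const
  have hD_mem : D ∈ Set.Icc (g Z) (g 1) := ⟨hgZ.le, by rw [hg1]; exact hsum.le⟩
  obtain ⟨z, hzmem, hgz⟩ := intermediate_value_Icc' hZ1 hcont hD_mem
  have hz0 : (0:ℝ) < z := lt_of_lt_of_le one_pos hzmem.1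
  refine ⟨z, hz0, hgz, ?_⟩
  intro x hx hxsum
  have key : ∀ i, (max ((y i + β) / z - β) 0 + β)
        * Real.log ((max ((y i + β) / z - β) 0 + β) / (y i + β))
        - max ((y i + β) / z - β) 0
        + (- Real.log z) * (x i - max ((y i + β) / z - β) 0)
      ≤ (x i + β) * Real.log ((x i + β) / (y i + β)) - x i := by
    intro i
    set m : ℝ := max ((y i + β) / z - β) 0 with hm
    have hc : 0 < y i + β := by linarith [hy i]
    have hm0 : 0 ≤ m := le_max_right _ _
    have hgrad := stmt13_grad_ineq β (y i + β) m (x i) hβ hc hm0 (hx i)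
    rcases le_or_gt β ((y i + β) / z) with h | h
    · have hmβ : m + β = (y i + β) / z := by
        rw [hm, max_eq_left (by linarith)]; ring
      have hlog : Real.log ((m + β) / (y i + β)) = - Real.log z := by
        rw [hmβ]
        have h' : (y i + β) / z / (y i + β) = z⁻¹ := by
          field_simp
          try ring
        rw [h', Real.log_inv]
      rw [hlog] at hgrad
      rw [hlog]
      linarith
    · have hmz : m = 0 := max_eq_right (by linarith)
      have hlog : - Real.log z ≤ Real.log ((m + β) / (y i + β)) := by
        rw [hmz, zero_add]
        have h1 : z⁻¹ ≤ β / (y i + β) := by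
          rw [le_div_iff₀ hc, inv_mul_eq_div, div_le_iff₀ hz0]
          linarith [(div_lt_iff₀ hz0).mp h]
        calc - Real.log z = Real.log z⁻¹ := (Real.log_inv z).symm
          _ ≤ Real.log (β / (y i + β)) := Real.log_le_log (by positivity) h1
      have hxm : 0 ≤ x i - m := by rw [hmz]; simpa using hx i
      nlinarith [hgrad, mul_le_mul_of_nonneg_right hlog hxm]
  have hgz' : ∑ i, max ((y i + β) / z - β) 0 = D := hgz
  have hsum0 : ∑ i, (x i - max ((y i + β) / z - β) 0) = 0 := by
    rw [Finset.sum_sub_distrib, hxsum, hgz']; ring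
  calc ∑ i, ((max ((y i + β) / z - β) 0 + β)
              * Real.log ((max ((y i + β) / z - β) 0 + β) / (y i + β))
              - max ((y i + β) / z - β) 0)
      = ∑ i, ((max ((y i + β) / z - β) 0 + β)
              * Real.log ((max ((y i + β) / z - β) 0 + β) / (y i + β))
              - max ((y i + β) / z - β) 0
              + (- Real.log z) * (x i - max ((y i + β) / z - β) 0)) := by
        rw [Finset.sum_add_distrib, ← Finset.mul_sum, hsum0, mul_zero, add_zero]
    _ ≤ ∑ i, ((x i + β) * Real.log ((x i + β) / (y i + β)) - x i) :=
        Finset.sum_le_sum (fun i _ => key i)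
end
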